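/- Let dim(·|·) be a bivariant Sylvester module rank function for a unital ring R. For any left R-modules M₁ ⊆ M₂ and M, and any R-module homomorphism α : M₂ → M, one has dim(α(M₁)|α(M₂)) ≤ dim(M₁|M₂). -/

import Mathlib

universe u
open scoped NNReal ENNReal

/-- A bivariant Sylvester module rank function for a unital ring `R`: to each pair of left
`R`-modules `N ⊆ M` (encoded as a submodule `N` of a module `M`) it assigns a value
`d M N ∈ ℝ≥0∞`, thought of as `dim(N|M)`, satisfying isomorphism invariance, normalization,
direct sum additivity, the two continuity conditions, and additivity. -/
structure BivariantSylvesterRank (R : Type u) [Ring R] where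
  d : ∀ (M : Type u) [AddCommGroup M] [Module R M], Submodule R M → ℝ≥0∞
  iso_invariant : ∀ (M N : Type u) [AddCommGroup M] [Module R M] [AddCommGroup N] [Module R N]
      (e : M ≃ₗ[R] N) (p : Submodule R M),
      d M p = d N (p.map (e : M →ₗ[R] N))
  d_zero : d PUnit ⊤ = 0
  d_ring : d R ⊤ = 1
  d_prod : ∀ (M N : Type u) [AddCommGroup M] [Module R M] [AddCommGroup N] [Module R N]
      (p : Submodule R M) (q : Submodule R N),
      d (M × N) (p.prod q) = d M p + d N q
  continuity_sup : ∀ (M : Type u) [AddCommGroup M] [Module R M] (p : Submodule R M),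
      d M p = ⨆ (p' : {p' : Submodule R M // p'.FG ∧ p' ≤ p}), d M p'.1
  continuity_inf : ∀ (M : Type u) [AddCommGroup M] [Module R M] (p : Submodule R M), p.FG →
      d M p = ⨅ (q : {q : Submodule R M // q.FG ∧ p ≤ q}), d q.1 (p.comap q.1.subtype)
  additivity : ∀ (M : Type u) [AddCommGroup M] [Module R M] (p : Submodule R M),
      d M ⊤ = d M p + d (M ⧸ p) ⊤

namespace BivariantSylvesterRank

variable {R : Type u} [Ring R] (dim : BivariantSylvesterRank R)

/-- Monotonicity of `d M ·`. -/
lemma mono (M : Type u) [AddCommGroup M] [Module R M] {p q : Submodule R M} (h : p ≤ q) :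
    dim.d M p ≤ dim.d M q := by
  rw [dim.continuity_sup M p, dim.continuity_sup M q]
  exact iSup_le fun p' => le_iSup_of_le ⟨p'.1, p'.2.1, p'.2.2.trans h⟩ le_rfl

lemma le_dTop (M : Type u) [AddCommGroup M] [Module R M] (p : Submodule R M) :
    dim.d M p ≤ dim.d M ⊤ := by
  rw [dim.additivity M p]; exact le_self_add

lemma quot_le (M : Type u) [AddCommGroup M] [Module R M] (p : Submodule R M) :
    dim.d (M ⧸ p) ⊤ ≤ dim.d M ⊤ := by
  rw [dim.additivity M p]; exact le_add_self

lemma iso_top (M N : Type u) [AddCommGroup M] [Module R M] [AddCommGroup N] [Module R N]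
    (e : M ≃ₗ[R] N) : dim.d M ⊤ = dim.d N ⊤ := by
  rw [dim.iso_invariant M N e ⊤, Submodule.map_top, LinearEquiv.range]

/-- An auxiliary linear equivalence. -/
def finSuccLEquiv (R : Type u) [Ring R] (n : ℕ) :
    (Fin (n + 1) → R) ≃ₗ[R] R × (Fin n → R) where
  toFun f := (f 0, f ∘ Fin.succ)
  invFun p := Fin.cons p.1 p.2
  map_add' _ _ := rfl
  map_smul' _ _ := rfl
  left_inv f := by
    funext i
    refine Fin.cases ?_ (fun j => ?_) i
    · exact Fin.cons_zero _ _
    · exact Fin.cons_succ _ _ _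
  right_inv p := by
    obtain ⟨a, f⟩ := p
    refine Prod.ext ?_ ?_
    · simp
    · funext j
      simp

def finZeroLEquiv (R : Type u) [Ring R] : (Fin 0 → R) ≃ₗ[R] PUnit.{u+1} where
  toFun _ := PUnit.unit
  invFun _ := 0
  map_add' _ _ := rfl
  map_smul' _ _ := rfl
  left_inv f := Subsingleton.elim _ _
  right_inv p := rfl

lemma dTop_pi_ne_top (n : ℕ) : dim.d (Fin n → R) ⊤ ≠ ⊤ := by
  induction n with
  | zero =>
      rw [dim.iso_top _ _ (finZeroLEquiv R), dim.d_zero]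
      exact ENNReal.zero_ne_top
  | succ n ih =>
      rw [dim.iso_top _ _ (finSuccLEquiv R n), ← Submodule.prod_top, dim.d_prod, dim.d_ring]
      exact ENNReal.add_ne_top.2 ⟨ENNReal.one_ne_top, ih⟩

lemma dTop_ne_top (M : Type u) [AddCommGroup M] [Module R M] [Module.Finite R M] :
    dim.d M ⊤ ≠ ⊤ := by
  obtain ⟨n, f, hf⟩ := Module.Finite.exists_fin' R M
  have h1 : dim.d M ⊤ = dim.d ((Fin n → R) ⧸ LinearMap.ker f) ⊤ :=
    (dim.iso_top _ _ (f.quotKerEquivOfSurjective hf)).symm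
  intro h
  apply dim.dTop_pi_ne_top n
  have h2 : dim.d M ⊤ ≤ dim.d (Fin n → R) ⊤ := by
    rw [h1]; exact dim.quot_le _ _
  rw [h] at h2
  exact top_le_iff.1 h2

lemma d_ne_top (M : Type u) [AddCommGroup M] [Module R M] [Module.Finite R M]
    (p : Submodule R M) : dim.d M p ≠ ⊤ :=
  fun h => dim.dTop_ne_top M (top_le_iff.1 (h ▸ dim.le_dTop M p))

/-- `dim(N|M) ≤ dim(N)` for f.g. `N`. -/
lemma d_le_fg (M : Type u) [AddCommGroup M] [Module R M] {p : Submodule R M} (hp : p.FG) :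
    dim.d M p ≤ dim.d ↥p ⊤ := by
  rw [dim.continuity_inf M p hp]
  refine (iInf_le _ ⟨p, hp, le_rfl⟩).trans ?_
  rw [Submodule.comap_subtype_self]

/-- Key inequality: for a finitely generated module,
`dim(M/N) + dim(M/K) ≤ dim(M) + dim(M/(N ⊔ K))`. -/
lemma key_ineq (M : Type u) [AddCommGroup M] [Module R M] [Module.Finite R M]
    (N K : Submodule R M) :
    dim.d (M ⧸ N) ⊤ + dim.d (M ⧸ K) ⊤ ≤ dim.d M ⊤ + dim.d (M ⧸ (N ⊔ K)) ⊤ := by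
  classical
  set δ : M →ₗ[R] (M ⧸ N) × (M ⧸ K) := N.mkQ.prod K.mkQ with hδ
  set P : Submodule R ((M ⧸ N) × (M ⧸ K)) := LinearMap.range δ with hP
  -- the map ψ with kernel P and range ⊤
  set f1 : (M ⧸ N) →ₗ[R] M ⧸ (N ⊔ K) :=
    Submodule.mapQ N (N ⊔ K) LinearMap.id (by simpa using (le_sup_left : N ≤ N ⊔ K)) with hf1
  set f2 : (M ⧸ K) →ₗ[R] M ⧸ (N ⊔ K) :=
    Submodule.mapQ K (N ⊔ K) LinearMap.id (by simpa using (le_sup_right : K ≤ N ⊔ K)) with hf2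
  set ψ : (M ⧸ N) × (M ⧸ K) →ₗ[R] M ⧸ (N ⊔ K) :=
    f1 ∘ₗ LinearMap.fst R (M ⧸ N) (M ⧸ K) - f2 ∘ₗ LinearMap.snd R (M ⧸ N) (M ⧸ K) with hψ
  have hψ_apply : ∀ (x y : M),
      ψ (Submodule.Quotient.mk x, Submodule.Quotient.mk y)
        = Submodule.Quotient.mk (x - y) := by
    intro x y
    simp [hψ, hf1, hf2, Submodule.mapQ_apply, Submodule.Quotient.mk_sub]
  have hker : LinearMap.ker ψ = P := by
    apply le_antisymm
    · rintro ⟨a, b⟩ hab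
      obtain ⟨x, rfl⟩ := Submodule.Quotient.mk_surjective N a
      obtain ⟨y, rfl⟩ := Submodule.Quotient.mk_surjective K b
      have h0 : (Submodule.Quotient.mk (x - y) : M ⧸ (N ⊔ K)) = 0 := by
        rw [← hψ_apply x y]; exact hab
      rw [Submodule.Quotient.mk_eq_zero] at h0
      obtain ⟨n, hn, k, hk, hnk⟩ := Submodule.mem_sup.1 h0
      refine ⟨x - n, ?_⟩
      have hx : (Submodule.Quotient.mk (x - n) : M ⧸ N) = Submodule.Quotient.mk x := by
        rw [Submodule.Quotient.eq]; simpa using N.neg_mem hn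
      have hy : (Submodule.Quotient.mk (x - n) : M ⧸ K) = Submodule.Quotient.mk y := by
        rw [Submodule.Quotient.eq]
        have hk2 : k = x - y - n := eq_sub_of_add_eq' hnk
        have : x - n - y = k := by rw [hk2]; abel
        rw [this]; exact hk
      exact Prod.ext hx hy
    · rintro _ ⟨x, rfl⟩
      show ψ (Submodule.Quotient.mk x, Submodule.Quotient.mk x) = 0
      rw [hψ_apply, sub_self, Submodule.Quotient.mk_zero]
  have hsurj : Function.Surjective ψ := by
    intro z
    obtain ⟨x, rfl⟩ := Submodule.Quotient.mk_surjective _ z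
    exact ⟨(Submodule.Quotient.mk x, 0), by
      simpa using hψ_apply x 0⟩
  -- dim of the product
  have hprod : dim.d ((M ⧸ N) × (M ⧸ K)) ⊤ = dim.d (M ⧸ N) ⊤ + dim.d (M ⧸ K) ⊤ := by
    rw [← Submodule.prod_top, dim.d_prod]
  -- additivity applied to P
  have hadd : dim.d ((M ⧸ N) × (M ⧸ K)) ⊤
      = dim.d ((M ⧸ N) × (M ⧸ K)) P + dim.d (((M ⧸ N) × (M ⧸ K)) ⧸ P) ⊤ :=
    dim.additivity _ P
  -- quotient by P is M ⧸ (N ⊔ K)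
  have hquot : dim.d (((M ⧸ N) × (M ⧸ K)) ⧸ P) ⊤ = dim.d (M ⧸ (N ⊔ K)) ⊤ :=
    dim.iso_top _ _ ((Submodule.quotEquivOfEq P (LinearMap.ker ψ) hker.symm).trans
      (ψ.quotKerEquivOfSurjective hsurj))
  -- P is f.g. and dim P ≤ dim M
  have hPfg : P.FG := by
    rw [hP, ← Submodule.map_top]
    exact Submodule.FG.map δ Module.Finite.fg_top
  have hPle : dim.d ((M ⧸ N) × (M ⧸ K)) P ≤ dim.d M ⊤ := by
    refine (dim.d_le_fg _ hPfg).trans ?_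
    have : dim.d ↥P ⊤ = dim.d (M ⧸ LinearMap.ker δ) ⊤ :=
      (dim.iso_top _ _ δ.quotKerEquivRange).symm
    rw [this]
    exact dim.quot_le M (LinearMap.ker δ)
  calc dim.d (M ⧸ N) ⊤ + dim.d (M ⧸ K) ⊤
      = dim.d ((M ⧸ N) × (M ⧸ K)) P + dim.d (M ⧸ (N ⊔ K)) ⊤ := by
        rw [← hprod, hadd, hquot]
    _ ≤ dim.d M ⊤ + dim.d (M ⧸ (N ⊔ K)) ⊤ := add_le_add_left hPle _

/-- The quotient case for a finitely generated ambient module. -/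
lemma fg_quot_le (M : Type u) [AddCommGroup M] [Module R M] [Module.Finite R M]
    (K N : Submodule R M) :
    dim.d (M ⧸ K) (N.map K.mkQ) ≤ dim.d M N := by
  have hmap : N.map K.mkQ = (N ⊔ K).map K.mkQ := by
    rw [Submodule.map_sup]
    have : K.map K.mkQ = ⊥ := by
      rw [eq_bot_iff]
      rintro y ⟨x, hx, rfl⟩
      simp only [Submodule.mem_bot, Submodule.mkQ_apply, Submodule.Quotient.mk_eq_zero]
      exact hx
    rw [this, sup_bot_eq]
  -- additivity on M at N
  have hA : dim.d M ⊤ = dim.d M N + dim.d (M ⧸ N) ⊤ := dim.additivity M N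
  -- additivity on M ⧸ K at N.map mkQ
  have hB : dim.d (M ⧸ K) ⊤
      = dim.d (M ⧸ K) (N.map K.mkQ) + dim.d ((M ⧸ K) ⧸ (N.map K.mkQ)) ⊤ :=
    dim.additivity _ _
  have hC : dim.d ((M ⧸ K) ⧸ (N.map K.mkQ)) ⊤ = dim.d (M ⧸ (N ⊔ K)) ⊤ := by
    rw [hmap]
    exact dim.iso_top _ _ (Submodule.quotientQuotientEquivQuotient K (N ⊔ K) le_sup_right)
  have key := dim.key_ineq M N K
  rw [hA, hB, hC] at key
  -- cancel finite terms
  have ha : dim.d (M ⧸ N) ⊤ ≠ ⊤ :=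
    fun h => dim.dTop_ne_top M (top_le_iff.1 (h ▸ dim.quot_le M N))
  have hb : dim.d (M ⧸ (N ⊔ K)) ⊤ ≠ ⊤ :=
    fun h => dim.dTop_ne_top M (top_le_iff.1 (h ▸ dim.quot_le M (N ⊔ K)))
  have key' : dim.d (M ⧸ K) (N.map K.mkQ) + (dim.d (M ⧸ N) ⊤ + dim.d (M ⧸ (N ⊔ K)) ⊤)
      ≤ dim.d M N + (dim.d (M ⧸ N) ⊤ + dim.d (M ⧸ (N ⊔ K)) ⊤) := by
    calc dim.d (M ⧸ K) (N.map K.mkQ) + (dim.d (M ⧸ N) ⊤ + dim.d (M ⧸ (N ⊔ K)) ⊤)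
        = dim.d (M ⧸ N) ⊤ + (dim.d (M ⧸ K) (N.map K.mkQ) + dim.d (M ⧸ (N ⊔ K)) ⊤) := by ring
      _ ≤ dim.d M N + dim.d (M ⧸ N) ⊤ + dim.d (M ⧸ (N ⊔ K)) ⊤ := key
      _ = dim.d M N + (dim.d (M ⧸ N) ⊤ + dim.d (M ⧸ (N ⊔ K)) ⊤) := by ring
  exact (ENNReal.add_le_add_iff_right (ENNReal.add_ne_top.2 ⟨ha, hb⟩)).1 key'

/-- Transport along the first isomorphism theorem. -/
lemma range_eq_quot (M₂ M : Type u) [AddCommGroup M₂] [Module R M₂] [AddCommGroup M]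
    [Module R M] (N : Submodule R M₂) (α : M₂ →ₗ[R] M) :
    dim.d ↥(LinearMap.range α) ((N.map α).comap (LinearMap.range α).subtype)
      = dim.d (M₂ ⧸ LinearMap.ker α) (N.map (LinearMap.ker α).mkQ) := by
  rw [dim.iso_invariant (M₂ ⧸ LinearMap.ker α) ↥(LinearMap.range α) α.quotKerEquivRange
    (N.map (LinearMap.ker α).mkQ)]
  congr 1
  have hcomp : (α.quotKerEquivRange : (M₂ ⧸ LinearMap.ker α) →ₗ[R] ↥(LinearMap.range α)) ∘ₗ
      (LinearMap.ker α).mkQ = α.rangeRestrict := by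
    apply LinearMap.ext
    intro x
    apply Subtype.ext
    simp [LinearMap.quotKerEquivRange_apply_mk]
  rw [← Submodule.map_comp, hcomp]
  ext y
  simp only [Submodule.mem_map, Submodule.mem_comap, Submodule.coe_subtype,
    LinearMap.rangeRestrict, LinearMap.codRestrict_apply, Subtype.ext_iff]

/-- The quotient-map case of the main statement. -/
lemma map_mkQ_le (M : Type u) [AddCommGroup M] [Module R M] (K N : Submodule R M) :
    dim.d (M ⧸ K) (N.map K.mkQ) ≤ dim.d M N := by
  classical
  suffices hfg : ∀ N' : Submodule R M, N'.FG → N' ≤ N →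
      dim.d (M ⧸ K) (N'.map K.mkQ) ≤ dim.d M N by
    rw [dim.continuity_sup (M ⧸ K) (N.map K.mkQ)]
    refine iSup_le ?_
    rintro ⟨p', hp'fg, hp'le⟩
    obtain ⟨s, hs⟩ := hp'fg
    have hmem : ∀ x : {x // x ∈ s}, ∃ m, m ∈ N ∧ K.mkQ m = ↑x := by
      rintro ⟨x, hx⟩
      have hx' : x ∈ N.map K.mkQ := hp'le (hs ▸ Submodule.subset_span hx)
      simpa [Submodule.mem_map] using hx'
    choose g hg1 hg2 using hmem
    have himg : (Submodule.span R (Set.range g)).map K.mkQ = p' := by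
      rw [Submodule.map_span, ← hs]
      congr 1
      ext y
      constructor
      · rintro ⟨_, ⟨x, rfl⟩, rfl⟩
        rw [hg2 x]; exact x.2
      · intro hy
        exact ⟨g ⟨y, hy⟩, ⟨⟨y, hy⟩, rfl⟩, hg2 _⟩
    have hle : Submodule.span R (Set.range g) ≤ N := by
      rw [Submodule.span_le]
      rintro _ ⟨x, rfl⟩
      exact hg1 x
    have := hfg _ (Submodule.fg_span (Set.finite_range g)) hle
    rwa [himg] at this
  intro N' hN'fg hN'le
  refine le_trans ?_ (dim.mono M hN'le)
  rw [dim.continuity_inf M N' hN'fg]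
  refine le_iInf ?_
  rintro ⟨q, hqfg, hN'q⟩
  rw [dim.continuity_inf (M ⧸ K) (N'.map K.mkQ) (hN'fg.map _)]
  refine (iInf_le _ ⟨q.map K.mkQ, hqfg.map _, Submodule.map_mono hN'q⟩).trans ?_
  set β : ↥q →ₗ[R] M ⧸ K := K.mkQ ∘ₗ q.subtype with hβ
  have hrange : LinearMap.range β = q.map K.mkQ := by
    rw [hβ, LinearMap.range_comp, Submodule.range_subtype]
  have himg : (N'.comap q.subtype).map β = N'.map K.mkQ := by
    rw [hβ, Submodule.map_comp, Submodule.map_comap_subtype, inf_eq_right.2 hN'q]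
  haveI : Module.Finite R ↥q := Module.Finite.iff_fg.2 hqfg
  have step := dim.fg_quot_le ↥q (LinearMap.ker β) (N'.comap q.subtype)
  have tr := dim.range_eq_quot ↥q (M ⧸ K) (N'.comap q.subtype) β
  rw [himg, hrange] at tr
  rw [tr]
  exact step

end BivariantSylvesterRank

/-- For a bivariant Sylvester module rank function for `R`, modules
`N ⊆ M₂` and a homomorphism `α : M₂ → M`, one has `dim(α(N)|α(M₂)) ≤ dim(N|M₂)`. Here
`α(M₂)` is the range of `α` and `α(N)` is viewed as a submodule of it. -/
theorem bivariantSylvesterRank_map_le (R : Type u) [Ring R]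
    (dim : BivariantSylvesterRank R)
    (M₂ M : Type u) [AddCommGroup M₂] [Module R M₂] [AddCommGroup M] [Module R M]
    (N : Submodule R M₂) (α : M₂ →ₗ[R] M) :
    dim.d ↥(LinearMap.range α)
        ((N.map α).comap (LinearMap.range α).subtype) ≤ dim.d M₂ N := by
  rw [dim.range_eq_quot M₂ M N α]
  exact dim.map_mkQ_le M₂ (LinearMap.ker α) N
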